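/- If U ⊆ ℝⁿ is a closed convex set such that every maximal face of dc(U) is exposed, then every Pareto optimal point of U maximizes a strictly positive linear functional over U, i.e., U^P = U⁺⁺. -/

import Mathlib

open Classical

noncomputable def dotp {n : ℕ} (φ u : Fin n → ℝ) : ℝ := ∑ i, φ i * u i

def Pareto {n : ℕ} (U : Set (Fin n → ℝ)) (u : Fin n → ℝ) : Prop :=
  u ∈ U ∧ ∀ v ∈ U, (∀ i, u i ≤ v i) → v = u

def dc {n : ℕ} (U : Set (Fin n → ℝ)) : Set (Fin n → ℝ) :=
  {x | ∃ u ∈ U, ∀ i, x i ≤ u i}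

def IsFace {n : ℕ} (U F : Set (Fin n → ℝ)) : Prop :=
  F.Nonempty ∧ F ⊆ U ∧ Convex ℝ F ∧
    ∀ v ∈ U, ∀ w ∈ U, ∀ α : ℝ, 0 < α → α < 1 →
      α • v + (1 - α) • w ∈ F → v ∈ F ∧ w ∈ F

noncomputable def seqSet {n : ℕ} (U : Set (Fin n → ℝ)) (φ : ℕ → (Fin n → ℝ)) :
    ℕ → Set (Fin n → ℝ)
  | 0 => U
  | t + 1 => {x ∈ seqSet U φ t | ∀ y ∈ seqSet U φ t, dotp (φ t) y ≤ dotp (φ t) x}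

def DownClosedIn {n : ℕ} (U : Set (Fin n → ℝ)) (J : Set (Fin n)) : Prop :=
  ∀ u ∈ U, ∀ τ : ℝ, 0 ≤ τ → ∀ K ⊆ J,
    (fun i => if i ∈ K then u i - τ else u i) ∈ U

def IsPolyhedron {n : ℕ} (P : Set (Fin n → ℝ)) : Prop :=
  ∃ (m : ℕ) (a : Fin m → (Fin n → ℝ)) (b : Fin m → ℝ),
    P = {x | ∀ i, (∑ j, a i j * x j) ≤ b i}

def NormalCone {n : ℕ} (U : Set (Fin n → ℝ)) (u : Fin n → ℝ) : Set (Fin n → ℝ) :=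
  {φ | ∀ v ∈ U, dotp φ v ≤ dotp φ u}

def riE {n : ℕ} (G : Set (Fin n → ℝ)) : Set (Fin n → ℝ) :=
  {u ∈ G | ∀ u' ∈ G, ∃ lam : ℝ, 0 < lam ∧ u + lam • (u - u') ∈ G}

theorem stmt13 {n : ℕ} (U : Set (Fin n → ℝ)) (hcl : IsClosed U) (hcv : Convex ℝ U)
    (hexp : ∀ F : Set (Fin n → ℝ), IsFace (dc U) F → (∀ x ∈ F, Pareto (dc U) x) →
      ∃ ψ : Fin n → ℝ, ψ ≠ 0 ∧ F = {x ∈ dc U | ∀ y ∈ dc U, dotp ψ y ≤ dotp ψ x}) :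
    {u | Pareto U u} =
      {u ∈ U | ∃ φ : Fin n → ℝ, (∀ i, 0 < φ i) ∧ ∀ v ∈ U, dotp φ v ≤ dotp φ u} := by
  ext u
  simp only [Set.mem_setOf_eq]
  constructor
  · rintro ⟨huU, hpar⟩
    -- basic facts about D = dc U
    have huD : u ∈ dc U := ⟨u, huU, fun i => le_rfl⟩
    have hcvD : Convex ℝ (dc U) := by
      rintro x ⟨ux, hux, hxle⟩ y ⟨uy, huy, hyle⟩ a b ha hb hab
      refine ⟨a • ux + b • uy, hcv hux huy ha hb hab, fun i => ?_⟩
      simp only [Pi.add_apply, Pi.smul_apply, smul_eq_mul]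
      nlinarith [hxle i, hyle i]
    have hparD : Pareto (dc U) u := by
      refine ⟨huD, ?_⟩
      rintro v ⟨w, hw, hvw⟩ hle
      have hw' : w = u := hpar w hw fun i => le_trans (hle i) (hvw i)
      funext i
      exact le_antisymm (hw' ▸ hvw i) (hle i)
    -- the minimal face of dc U containing u
    set F : Set (Fin n → ℝ) :=
      {x | x ∈ dc U ∧ ∃ l : ℝ, 0 < l ∧ u + l • (u - x) ∈ dc U} with hFdef
    have huF : u ∈ F := ⟨huD, 1, one_pos, by simpa using huD⟩
    -- shrinking the lambda keeps membership
    have hshrink : ∀ x, x ∈ dc U → ∀ l l' : ℝ, 0 < l' → l' ≤ l →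
        u + l • (u - x) ∈ dc U → u + l' • (u - x) ∈ dc U := by
      intro x hx l l' hl' hle hmem
      have hlpos : 0 < l := lt_of_lt_of_le hl' hle
      have h1 : (0:ℝ) ≤ l' / l := le_of_lt (div_pos hl' hlpos)
      have h2 : (0:ℝ) ≤ 1 - l' / l := by
        have : l' / l ≤ 1 := (div_le_one hlpos).mpr hle
        linarith
      have hcomb := hcvD hmem huD h1 h2 (by ring)
      have heq : (l' / l) • (u + l • (u - x)) + (1 - l' / l) • u
          = u + l' • (u - x) := by
        funext i
        simp only [Pi.add_apply, Pi.smul_apply, Pi.sub_apply, smul_eq_mul]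
        field_simp
        ring
      rwa [heq] at hcomb
    -- the auxiliary face step
    have hfaceaux : ∀ v ∈ dc U, ∀ w ∈ dc U, ∀ α : ℝ, 0 < α → α < 1 →
        α • v + (1 - α) • w ∈ F → v ∈ F := by
      intro v hv w hw α hα0 hα1 hm
      obtain ⟨hmD, l, hl, hp⟩ := hm
      set d : ℝ := 1 + l - l * α with hd
      have hd0 : 0 < d := by nlinarith
      refine ⟨hv, l * α / d, div_pos (by positivity) hd0, ?_⟩
      have hcomb := hcvD hp hw (a := 1 / d) (b := l * (1 - α) / d)
        (by positivity) (by
          apply div_nonneg _ (le_of_lt hd0)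
          nlinarith) (by field_simp [hd]; ring)
      have heq : (1 / d) • (u + l • (u - (α • v + (1 - α) • w)))
          + (l * (1 - α) / d) • w = u + (l * α / d) • (u - v) := by
        funext i
        simp only [Pi.add_apply, Pi.smul_apply, Pi.sub_apply, smul_eq_mul]
        field_simp
        ring
      rwa [heq] at hcomb
    have hface : IsFace (dc U) F := by
      refine ⟨⟨u, huF⟩, fun x hx => hx.1, ?_, ?_⟩
      · -- convexity
        rintro x ⟨hxD, lx, hlx, hpx⟩ y ⟨hyD, ly, hly, hpy⟩ a b ha hb hab
        refine ⟨hcvD hxD hyD ha hb hab, min lx ly, lt_min hlx hly, ?_⟩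
        have hx' := hshrink x hxD lx (min lx ly) (lt_min hlx hly) (min_le_left _ _) hpx
        have hy' := hshrink y hyD ly (min lx ly) (lt_min hlx hly) (min_le_right _ _) hpy
        have hcomb := hcvD hx' hy' ha hb hab
        have heq : a • (u + min lx ly • (u - x)) + b • (u + min lx ly • (u - y))
            = u + min lx ly • (u - (a • x + b • y)) := by
          funext i
          simp only [Pi.add_apply, Pi.smul_apply, Pi.sub_apply, smul_eq_mul]
          linear_combination (u i + (lx ⊓ ly) * u i) * hab
        rwa [heq] at hcomb
      · intro v hv w hw α hα0 hα1 hm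
        refine ⟨hfaceaux v hv w hw α hα0 hα1 hm, ?_⟩
        apply hfaceaux w hw v hv (1 - α) (by linarith) (by linarith)
        have : (1 - α) • w + (1 - (1 - α)) • v = α • v + (1 - α) • w := by
          funext i
          simp only [Pi.add_apply, Pi.smul_apply, smul_eq_mul]
          ring
        rwa [this]
    -- every point of F is Pareto in dc U
    have hFpar : ∀ x ∈ F, Pareto (dc U) x := by
      rintro x ⟨hxD, l, hl, hp⟩
      refine ⟨hxD, fun w hwD hle => ?_⟩
      have h1 : (0:ℝ) ≤ 1 / (1 + l) := by positivity
      have h2 : (0:ℝ) ≤ l / (1 + l) := by positivity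
      have hcomb := hcvD hp hwD h1 h2 (by field_simp)
      set q := (1 / (1 + l)) • (u + l • (u - x)) + (l / (1 + l)) • w with hq
      have hqge : ∀ i, u i ≤ q i := by
        intro i
        simp only [hq, Pi.add_apply, Pi.smul_apply, Pi.sub_apply, smul_eq_mul]
        have hli : x i ≤ w i := hle i
        have h1l : (0:ℝ) < 1 + l := by linarith
        rw [div_mul_eq_mul_div, div_mul_eq_mul_div, ← add_div, le_div_iff₀ h1l]
        nlinarith
      have hqu : q = u := hparD.2 q hcomb hqge
      funext i
      have := congrFun hqu i
      simp only [hq, Pi.add_apply, Pi.smul_apply, Pi.sub_apply, smul_eq_mul] at this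
      have h1l : (0:ℝ) < 1 + l := by linarith
      have : l * w i = l * x i := by
        field_simp at this
        nlinarith [this]
      have := mul_left_cancel₀ (ne_of_gt hl) this
      linarith [this]
    -- apply the exposedness hypothesis
    obtain ⟨ψ, hψ0, hFeq⟩ := hexp F hface hFpar
    have humax : ∀ y ∈ dc U, dotp ψ y ≤ dotp ψ u := by
      have := hFeq ▸ huF
      exact this.2
    -- ψ is strictly positive
    have hψpos : ∀ j, 0 < ψ j := by
      intro j
      by_contra hneg
      push_neg at hneg
      set y : Fin n → ℝ := fun i => if i = j then u i - 1 else u i with hy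
      have hyle : ∀ i, y i ≤ u i := by
        intro i
        by_cases h : i = j <;> simp [hy, h]
      have hyD : y ∈ dc U := ⟨u, huU, hyle⟩
      have hdiff : dotp ψ u - dotp ψ y = ψ j := by
        rw [dotp, dotp, ← Finset.sum_sub_distrib]
        have : ∀ i, ψ i * u i - ψ i * y i = if i = j then ψ j else 0 := by
          intro i
          by_cases h : i = j <;> simp [hy, h] <;> ring
        simp only [this]
        simp
      have hymax : ∀ z ∈ dc U, dotp ψ z ≤ dotp ψ y := by
        intro z hz
        have := humax z hz
        linarith
      have hyF : y ∈ F := hFeq ▸ ⟨hyD, hymax⟩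
      have := (hFpar y hyF).2 u huD hyle
      have := congrFun this j
      simp [hy] at this
      linarith
    exact ⟨huU, ψ, hψpos, fun v hv => humax v ⟨v, hv, fun i => le_rfl⟩⟩
  · rintro ⟨huU, φ, hφ, hmax⟩
    refine ⟨huU, fun v hv hle => ?_⟩
    have hterm : ∀ i ∈ Finset.univ, 0 ≤ φ i * (v i - u i) := by
      intro i _
      have := hle i
      nlinarith [hφ i]
    have hsum : ∑ i, φ i * (v i - u i) ≤ 0 := by
      have := hmax v hv
      simp only [dotp] at this
      have : ∑ i, φ i * (v i - u i) = dotp φ v - dotp φ u := by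
        simp [dotp, ← Finset.sum_sub_distrib, mul_sub]
      rw [this]
      have := hmax v hv
      linarith
    have hzero : ∀ i ∈ Finset.univ, φ i * (v i - u i) = 0 :=
      (Finset.sum_eq_zero_iff_of_nonneg hterm).mp
        (le_antisymm hsum (Finset.sum_nonneg hterm))
    funext i
    have := hzero i (Finset.mem_univ i)
    have hφi := hφ i
    have : v i - u i = 0 := by
      rcases mul_eq_zero.mp this with h | h
      · exact absurd h (ne_of_gt hφi)
      · exact h
    linarith
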